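/- Let γ > 1 and consider an ideal-MHD state with ρ > 0, p > 0 and b_⊥ > 0. With R̂ and Z as defined from this state, and with |Λ| = diag(|u + c_f|, |u + c_a|, |u + c_s|, |u|, |u|, |u − c_s|, |u − c_a|, |u − c_f|) where c_a = |b₁|, the dissipation matrix D := R̂ |Λ| Z R̂ᵀ is symmetric positive semidefinite; consequently, for every vector x ∈ ℝ⁸, −½ xᵀ D x ≤ 0 (the dissipation term of the KEPES flux never produces entropy of the wrong sign). -/

import Mathlib

open Matrix

noncomputable section

/-- Sign function σ with σ(x) = 1 for x ≥ 0 and −1 otherwise. -/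
def sgnR (x : ℝ) : ℝ := if 0 ≤ x then 1 else -1

/-- the dissipation matrix D = R̂ |Λ| Z R̂ᵀ of the KEPES flux is symmetric
positive semidefinite, so the dissipation term never produces entropy of the wrong sign. -/
theorem kepes_dissipation_matrix_posSemidef
    (γ ρ u v w p B1 B2 B3 a b1 b2 b3 bperp β2 β3 cf cs αf αs : ℝ)
    (hγ : 1 < γ) (hρ : 0 < ρ) (hp : 0 < p)
    (ha : a = Real.sqrt (γ * p / ρ))
    (hb1 : b1 = B1 / Real.sqrt ρ) (hb2 : b2 = B2 / Real.sqrt ρ) (hb3 : b3 = B3 / Real.sqrt ρ)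
    (hbperp : bperp = Real.sqrt (b2 ^ 2 + b3 ^ 2)) (hbperp_pos : 0 < bperp)
    (hβ2 : β2 = b2 / bperp) (hβ3 : β3 = b3 / bperp)
    (hcf0 : 0 ≤ cf) (hcs0 : 0 ≤ cs)
    (hcf : cf ^ 2 = ((a ^ 2 + (b1 ^ 2 + b2 ^ 2 + b3 ^ 2))
        + Real.sqrt ((a ^ 2 + (b1 ^ 2 + b2 ^ 2 + b3 ^ 2)) ^ 2 - 4 * a ^ 2 * b1 ^ 2)) / 2)
    (hcs : cs ^ 2 = ((a ^ 2 + (b1 ^ 2 + b2 ^ 2 + b3 ^ 2))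
        - Real.sqrt ((a ^ 2 + (b1 ^ 2 + b2 ^ 2 + b3 ^ 2)) ^ 2 - 4 * a ^ 2 * b1 ^ 2)) / 2)
    (hαf : αf = Real.sqrt ((a ^ 2 - cs ^ 2) / (cf ^ 2 - cs ^ 2)))
    (hαs : αs = Real.sqrt ((cf ^ 2 - a ^ 2) / (cf ^ 2 - cs ^ 2))) :
    let usq := u ^ 2 + v ^ 2 + w ^ 2
    let Ψpf := αf * ρ * usq / 2 + a * αs * ρ * bperp + αf * ρ * a ^ 2 / (γ - 1)
        + αf * cf * ρ * u - αs * cs * ρ * sgnR b1 * (v * β2 + w * β3)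
    let Ψmf := αf * ρ * usq / 2 + a * αs * ρ * bperp + αf * ρ * a ^ 2 / (γ - 1)
        - αf * cf * ρ * u + αs * cs * ρ * sgnR b1 * (v * β2 + w * β3)
    let Ψps := αs * ρ * usq / 2 - a * αf * ρ * bperp + αs * ρ * a ^ 2 / (γ - 1)
        + αs * cs * ρ * u + αf * cf * ρ * sgnR b1 * (v * β2 + w * β3)
    let Ψms := αs * ρ * usq / 2 - a * αf * ρ * bperp + αs * ρ * a ^ 2 / (γ - 1)
        - αs * cs * ρ * u - αf * cf * ρ * sgnR b1 * (v * β2 + w * β3)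
    let rE : Fin 8 → ℝ := ![1, u, v, w, usq / 2, 0, 0, 0]
    let rD : Fin 8 → ℝ := ![0, 0, 0, 0, B1, 1, 0, 0]
    let rpa : Fin 8 → ℝ :=
      ![0, 0, ρ * Real.sqrt ρ * β3, -(ρ * Real.sqrt ρ * β2),
        -(ρ * Real.sqrt ρ * (β2 * w - β3 * v)), 0, -(ρ * β3), ρ * β2]
    let rma : Fin 8 → ℝ :=
      ![0, 0, -(ρ * Real.sqrt ρ * β3), ρ * Real.sqrt ρ * β2,
        ρ * Real.sqrt ρ * (β2 * w - β3 * v), 0, -(ρ * β3), ρ * β2]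
    let rpf : Fin 8 → ℝ :=
      ![αf * ρ, αf * ρ * (u + cf), ρ * (αf * v - αs * cs * β2 * sgnR b1),
        ρ * (αf * w - αs * cs * β3 * sgnR b1), Ψpf, 0,
        αs * a * β2 * Real.sqrt ρ, αs * a * β3 * Real.sqrt ρ]
    let rmf : Fin 8 → ℝ :=
      ![αf * ρ, αf * ρ * (u - cf), ρ * (αf * v + αs * cs * β2 * sgnR b1),
        ρ * (αf * w + αs * cs * β3 * sgnR b1), Ψmf, 0,
        αs * a * β2 * Real.sqrt ρ, αs * a * β3 * Real.sqrt ρ]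
    let rps : Fin 8 → ℝ :=
      ![αs * ρ, αs * ρ * (u + cs), ρ * (αs * v + αf * cf * β2 * sgnR b1),
        ρ * (αs * w + αf * cf * β3 * sgnR b1), Ψps, 0,
        -(αf * a * β2 * Real.sqrt ρ), -(αf * a * β3 * Real.sqrt ρ)]
    let rms : Fin 8 → ℝ :=
      ![αs * ρ, αs * ρ * (u - cs), ρ * (αs * v - αf * cf * β2 * sgnR b1),
        ρ * (αs * w - αf * cf * β3 * sgnR b1), Ψms, 0,
        -(αf * a * β2 * Real.sqrt ρ), -(αf * a * β3 * Real.sqrt ρ)]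
    let Rhat : Matrix (Fin 8) (Fin 8) ℝ :=
      (Matrix.of ![rpf, rpa, rps, rE, rD, rms, rma, rmf])ᵀ
    let Z : Matrix (Fin 8) (Fin 8) ℝ :=
      Matrix.diagonal ![1 / (2 * ρ * γ), p / (2 * ρ ^ 3), 1 / (2 * ρ * γ),
        ρ * (γ - 1) / γ, p / ρ, 1 / (2 * ρ * γ), p / (2 * ρ ^ 3), 1 / (2 * ρ * γ)]
    let ca := |b1|
    let Λabs : Matrix (Fin 8) (Fin 8) ℝ :=
      Matrix.diagonal ![|u + cf|, |u + ca|, |u + cs|, |u|, |u|, |u - cs|, |u - ca|, |u - cf|]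
    let D : Matrix (Fin 8) (Fin 8) ℝ := Rhat * Λabs * Z * Rhatᵀ
    D.PosSemidef ∧ ∀ x : Fin 8 → ℝ, -(1 / 2) * (x ⬝ᵥ D.mulVec x) ≤ 0 := by

  intro usq Ψpf Ψmf Ψps Ψms rE rD rpa rma rpf rmf rps rms Rhat Z ca Λabs D
  have hγ1 : (0:ℝ) < γ - 1 := by linarith
  have hZ : ∀ i : Fin 8, 0 ≤ (![1 / (2 * ρ * γ), p / (2 * ρ ^ 3), 1 / (2 * ρ * γ),
      ρ * (γ - 1) / γ, p / ρ, 1 / (2 * ρ * γ), p / (2 * ρ ^ 3), 1 / (2 * ρ * γ)] : Fin 8 → ℝ) i := by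
    have h1 : (0:ℝ) ≤ 1 / (2 * ρ * γ) := by positivity
    have h2 : (0:ℝ) ≤ p / (2 * ρ ^ 3) := by positivity
    have h3 : (0:ℝ) ≤ ρ * (γ - 1) / γ := div_nonneg (mul_nonneg hρ.le hγ1.le) (by linarith)
    have h4 : (0:ℝ) ≤ p / ρ := by positivity
    intro i
    fin_cases i <;> first | exact h1 | exact h2 | exact h3 | exact h4
  have hM : (Λabs * Z).PosSemidef := by
    have e : Λabs * Z = Matrix.diagonal
        ((![|u + cf|, |u + ca|, |u + cs|, |u|, |u|, |u - cs|, |u - ca|, |u - cf|] : Fin 8 → ℝ) *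
          ![1 / (2 * ρ * γ), p / (2 * ρ ^ 3), 1 / (2 * ρ * γ), ρ * (γ - 1) / γ, p / ρ,
            1 / (2 * ρ * γ), p / (2 * ρ ^ 3), 1 / (2 * ρ * γ)]) :=
      Matrix.diagonal_mul_diagonal _ _
    rw [e]
    refine Matrix.posSemidef_diagonal_iff.mpr fun i => ?_
    exact mul_nonneg (by fin_cases i <;> exact abs_nonneg _) (hZ i)
  have hD : D.PosSemidef := by
    have : D = Rhat * (Λabs * Z) * Rhatᴴ := by
      rw [Matrix.conjTranspose_eq_transpose_of_trivial]
      show Rhat * Λabs * Z * Rhatᵀ = _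
      rw [Matrix.mul_assoc Rhat]
    rw [this]
    exact hM.mul_mul_conjTranspose_same Rhat
  refine ⟨hD, fun x => ?_⟩
  have h := hD.dotProduct_mulVec_nonneg x
  simp only [star_trivial] at h
  nlinarith [h]


end
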